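/- arXiv:2008.06130 — 4 statements merged into one kernel-verified Lean document; each statement's English description precedes it below -/
import Mathlib

section
/- Under Assumptions A1, A2 and A3, the vector E[G₁Y₁] exists (each entry of G₁Y₁ is integrable), the matrix E[G₁X₁ᵀ] is invertible, and the regression parameter is identified by ψ = E[Z₁] and β = (E[G₁X₁ᵀ])⁻¹ E[G₁Y₁]. -/
open MeasureTheory Matrix

/-- Under A1–A3, `E[G₁Y₁]` exists, `E[G₁X₁ᵀ]` is invertible,
and `β` is identified: `ψ = E[Z₁]` and `β = (E[G₁X₁ᵀ])⁻¹ E[G₁Y₁]`. -/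
theorem statement1
    {Ω : Type*} [MeasurableSpace Ω] (μ : Measure Ω) [IsProbabilityMeasure μ]
    {p : ℕ} (Z : Ω → Fin p → ℝ) (Y : Ω → ℝ)
    (hZmeas : Measurable Z) (hYmeas : Measurable Y)
    -- Assumption A1
    (hYint : Integrable Y μ)
    (hZint : ∀ i, Integrable (fun ω => Z ω i) μ)
    (ψ : Fin p → ℝ) (hψ : ψ = fun i => ∫ ω, Z ω i ∂μ)
    (X : Ω → Fin (p + 1) → ℝ)
    (hX : X = fun ω => Fin.cons 1 (fun i => Z ω i - ψ i))
    (G : Ω → Fin (p + 1) → ℝ)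
    (hG : G = fun ω i => X ω i / Real.sqrt (∑ k, X ω k ^ 2))
    (β : Fin (p + 1) → ℝ)
    -- Assumption A2 : E[Y₁ | Z₁] = X₁ᵀ β almost surely
    (hA2 : μ[Y | MeasurableSpace.comap Z inferInstance]
        =ᵐ[μ] fun ω => ∑ i, X ω i * β i)
    -- Assumption A3 : E[G₁X₁ᵀ] is positive definite
    (hA3 : (Matrix.of fun i k => ∫ ω, G ω i * X ω k ∂μ).PosDef) :
    (∀ i, Integrable (fun ω => G ω i * Y ω) μ) ∧
      IsUnit (Matrix.of fun i k => ∫ ω, G ω i * X ω k ∂μ).det ∧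
      β = (Matrix.of fun i k => ∫ ω, G ω i * X ω k ∂μ)⁻¹.mulVec
            (fun i => ∫ ω, G ω i * Y ω ∂μ) := by
  have hm : MeasurableSpace.comap Z inferInstance ≤ _ := hZmeas.comap_le
  haveI : SigmaFinite (μ.trim hm) := inferInstance
  -- auxiliary function expressing X through Z
  set φ : (Fin p → ℝ) → Fin (p + 1) → ℝ :=
    fun z => Fin.cons 1 (fun j => z j - ψ j) with hφdef
  have hφmeas : Measurable φ := by
    refine measurable_pi_iff.mpr fun i => ?_
    refine Fin.cases ?_ (fun j => ?_) i
    · simp only [hφdef, Fin.cons_zero]; exact measurable_const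
    · simp only [hφdef, Fin.cons_succ]
      exact (measurable_pi_apply j).sub measurable_const
  have hXφ : ∀ ω, X ω = φ (Z ω) := fun ω => by rw [hX]
  have hXmeas : Measurable X := by rw [hX]; exact hφmeas.comp hZmeas
  -- pointwise facts
  have hX0 : ∀ ω, X ω 0 = 1 := fun ω => by rw [hX]; simp
  have hsum_ge : ∀ ω, (1 : ℝ) ≤ ∑ k, X ω k ^ 2 := by
    intro ω
    have h1 : X ω 0 ^ 2 ≤ ∑ k, X ω k ^ 2 :=
      Finset.single_le_sum (fun k _ => sq_nonneg (X ω k)) (Finset.mem_univ 0)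
    rw [hX0 ω, one_pow] at h1
    exact h1
  have hsqrt_ge : ∀ ω, (1 : ℝ) ≤ Real.sqrt (∑ k, X ω k ^ 2) := by
    intro ω
    rw [show (1:ℝ) = Real.sqrt 1 by simp]
    exact Real.sqrt_le_sqrt (hsum_ge ω)
  have hGbd : ∀ ω i, |G ω i| ≤ 1 := by
    intro ω i
    rw [hG]
    have hs : (0 : ℝ) < Real.sqrt (∑ k, X ω k ^ 2) := lt_of_lt_of_le one_pos (hsqrt_ge ω)
    rw [abs_div, abs_of_pos hs, div_le_one hs]
    calc |X ω i| = Real.sqrt (X ω i ^ 2) := (Real.sqrt_sq_eq_abs _).symm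
      _ ≤ Real.sqrt (∑ k, X ω k ^ 2) := Real.sqrt_le_sqrt
          (Finset.single_le_sum (fun k _ => sq_nonneg (X ω k)) (Finset.mem_univ i))
  have hGmeas : Measurable G := by
    rw [hG]
    refine measurable_pi_iff.mpr fun i => ?_
    exact ((measurable_pi_apply i).comp hXmeas).div
      ((Finset.measurable_sum _ fun k _ => ((measurable_pi_apply k).comp hXmeas).pow_const 2).sqrt)
  -- G i is m-strongly-measurable
  have hGm : ∀ i, StronglyMeasurable[MeasurableSpace.comap Z inferInstance] (fun ω => G ω i) := by
    intro i
    have : (fun ω => G ω i)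
        = (fun z => φ z i / Real.sqrt (∑ k, φ z k ^ 2)) ∘ Z := by
      funext ω
      simp only [Function.comp_apply, hG, hXφ ω]
    rw [this]
    have hφi : Measurable (fun z : Fin p → ℝ => φ z i / Real.sqrt (∑ k, φ z k ^ 2)) :=
      ((measurable_pi_apply i).comp hφmeas).div
        ((Finset.measurable_sum _ fun k _ =>
          ((measurable_pi_apply k).comp hφmeas).pow_const 2).sqrt)
    exact (hφi.comp (comap_measurable Z)).stronglyMeasurable
  -- integrability of X coordinates
  have hXint : ∀ k, Integrable (fun ω => X ω k) μ := by
    intro k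
    refine Fin.cases ?_ (fun j => ?_) k
    · simp only [hX0]; exact integrable_const 1
    · have : (fun ω => X ω j.succ) = fun ω => Z ω j - ψ j := by
        funext ω; rw [hX]; simp
      rw [this]
      exact (hZint j).sub (integrable_const _)
  -- integrability claims
  have hGYint : ∀ i, Integrable (fun ω => G ω i * Y ω) μ := by
    intro i
    exact hYint.bdd_mul ((hGmeas.eval (a := i)).aestronglyMeasurable)
      (c := 1) (Filter.Eventually.of_forall fun ω => by simpa using hGbd ω i)
  have hGXint : ∀ i k, Integrable (fun ω => G ω i * X ω k) μ := by
    intro i k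
    exact (hXint k).bdd_mul ((hGmeas.eval (a := i)).aestronglyMeasurable)
      (c := 1) (Filter.Eventually.of_forall fun ω => by simpa using hGbd ω i)
  -- the matrix and its invertibility
  set M : Matrix (Fin (p + 1)) (Fin (p + 1)) ℝ :=
    Matrix.of fun i k => ∫ ω, G ω i * X ω k ∂μ with hMdef
  have hdet : IsUnit M.det := (isUnit_iff_ne_zero).mpr hA3.det_pos.ne'
  refine ⟨hGYint, hdet, ?_⟩
  -- key identity: ∫ G i Y = (M.mulVec β) i
  have hkey : ∀ i, ∫ ω, G ω i * Y ω ∂μ = M.mulVec β i := by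
    intro i
    have hmul : μ[(fun ω => G ω i) * Y | MeasurableSpace.comap Z inferInstance]
        =ᵐ[μ] (fun ω => G ω i) * μ[Y | MeasurableSpace.comap Z inferInstance] :=
      condExp_mul_of_stronglyMeasurable_left (hGm i) (hGYint i) hYint
    have h1 : ∫ ω, G ω i * Y ω ∂μ
        = ∫ ω, ((fun ω => G ω i) * μ[Y | MeasurableSpace.comap Z inferInstance]) ω ∂μ := by
      calc ∫ ω, G ω i * Y ω ∂μ
          = ∫ ω, ((fun ω => G ω i) * Y) ω ∂μ := rfl
        _ = ∫ ω, (μ[(fun ω => G ω i) * Y | MeasurableSpace.comap Z inferInstance]) ω ∂μ :=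
            (integral_condExp hm).symm
        _ = _ := integral_congr_ae hmul
    have h2 : ((fun ω => G ω i) * μ[Y | MeasurableSpace.comap Z inferInstance]) =ᵐ[μ]
        fun ω => ∑ k, β k * (G ω i * X ω k) := by
      filter_upwards [hA2] with ω hω
      simp only [Pi.mul_apply, hω]
      rw [Finset.mul_sum]
      congr 1
      funext k
      ring
    rw [h1, integral_congr_ae h2,
      integral_finset_sum _ (fun k _ => ((hGXint i k).const_mul (β k)))]
    simp only [Matrix.mulVec, dotProduct, hMdef, Matrix.of_apply]
    congr 1
    funext k
    rw [integral_const_mul]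
    ring
  have hvec : (fun i => ∫ ω, G ω i * Y ω ∂μ) = M.mulVec β := funext hkey
  rw [hvec, Matrix.mulVec_mulVec, Matrix.nonsing_inv_mul M hdet, Matrix.one_mulVec]
end

section
/- Suppose the (p+1)×(p+1) matrix S_{G,X} = n⁻¹ Σ_{j=1}ⁿ G_j X_jᵀ is positive definite. Then the weighted Gram matrix S̃ = Σ_{j=1}ⁿ w_j (z_j − Z̃)(z_j − Z̃)ᵀ is invertible, and the components of β̂ = S_{G,X}⁻¹ S_{G,Y} satisfy β̂_{1:p} = S̃⁻¹ Σ_{j=1}ⁿ w_j (z_j − Z̃)(y_j − Ỹ) and β̂₀ = Ỹ − (Z̃ − Z̄)ᵀ β̂_{1:p}, where β̂ = (β̂₀, β̂_{1:p}ᵀ)ᵀ. -/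
open Matrix Finset

/-- If `S_{G,X}` is positive definite then the weighted Gram
matrix `S̃` is invertible, and the components of `β̂ = S_{G,X}⁻¹ S_{G,Y}`
satisfy `β̂_{1:p} = S̃⁻¹ Σ w_j (z_j − Z̃)(y_j − Ỹ)` and
`β̂₀ = Ỹ − (Z̃ − Z̄)ᵀ β̂_{1:p}`. -/
theorem statement2 {p n : ℕ} (hn : 0 < n)
    (z : Fin n → Fin p → ℝ) (y : Fin n → ℝ)
    (Zbar : Fin p → ℝ) (hZbar : Zbar = fun i => (n : ℝ)⁻¹ * ∑ j, z j i)
    (X : Fin n → Fin (p + 1) → ℝ)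
    (hX : X = fun j => Fin.cons 1 (fun i => z j i - Zbar i))
    (G : Fin n → Fin (p + 1) → ℝ)
    (hG : G = fun j i => X j i / Real.sqrt (∑ k, X j k ^ 2))
    (SGX : Matrix (Fin (p + 1)) (Fin (p + 1)) ℝ)
    (hSGX : SGX = (n : ℝ)⁻¹ • ∑ j, Matrix.of fun i k => G j i * X j k)
    (SGY : Fin (p + 1) → ℝ)
    (hSGY : SGY = (n : ℝ)⁻¹ • ∑ j, y j • G j)
    (βhat : Fin (p + 1) → ℝ) (hβhat : βhat = SGX⁻¹.mulVec SGY)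
    (w : Fin n → ℝ)
    (hw : w = fun j => (Real.sqrt (∑ k, X j k ^ 2))⁻¹ /
            ∑ i, (Real.sqrt (∑ k, X i k ^ 2))⁻¹)
    (Ytilde : ℝ) (hYtilde : Ytilde = ∑ j, w j * y j)
    (Ztilde : Fin p → ℝ) (hZtilde : Ztilde = fun i => ∑ j, w j * z j i)
    (Stilde : Matrix (Fin p) (Fin p) ℝ)
    (hStilde : Stilde = ∑ j, w j • Matrix.of
        (fun i k => (z j i - Ztilde i) * (z j k - Ztilde k)))
    (hpos : SGX.PosDef) :
    IsUnit Stilde.det ∧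
      (fun i : Fin p => βhat i.succ) =
        Stilde⁻¹.mulVec (∑ j, w j • fun i => (z j i - Ztilde i) * (y j - Ytilde)) ∧
      βhat 0 = Ytilde - ∑ i, (Ztilde i - Zbar i) * βhat i.succ := by
  have hX0 : ∀ j, X j 0 = 1 := by intro j; simp [hX]
  have hXs : ∀ j i, X j i.succ = z j i - Zbar i := by intro j i; simp [hX]
  set c : Fin n → ℝ := fun j => (Real.sqrt (∑ k, X j k ^ 2))⁻¹ with hc
  have hcpos : ∀ j, 0 < c j := by
    intro j
    have h1 : (0:ℝ) < ∑ k, X j k ^ 2 := by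
      have h2 := Finset.single_le_sum (f := fun k => X j k ^ 2)
        (fun k _ => sq_nonneg _) (Finset.mem_univ (0 : Fin (p+1)))
      simp only [hX0 j, one_pow] at h2
      linarith
    simp only [hc]
    exact inv_pos.2 (Real.sqrt_pos.2 h1)
  set C : ℝ := ∑ j, c j with hC
  have hCpos : 0 < C := by
    have : Nonempty (Fin n) := ⟨⟨0, hn⟩⟩
    exact Finset.sum_pos (fun j _ => hcpos j) Finset.univ_nonempty
  have hwj : ∀ j, w j = c j / C := by intro j; rw [hw]
  have hcw : ∀ j, c j = C * w j := by
    intro j; rw [hwj]; field_simp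
  have hwsum : ∑ j, w j = 1 := by
    simp only [hwj]
    rw [← Finset.sum_div, div_eq_one_iff_eq hCpos.ne']
  have hG' : ∀ j i, G j i = c j * X j i := by
    intro j i; rw [hG]; simp only [hc]; rw [div_eq_inv_mul]
  set u : Fin n → Fin p → ℝ := fun j i => z j i - Ztilde i with hu
  set d : Fin p → ℝ := fun i => Ztilde i - Zbar i with hd
  have hu' : ∀ j i, u j i = z j i - Ztilde i := fun _ _ => rfl
  have hu0 : ∀ i, ∑ j, w j * u j i = 0 := by
    intro i
    simp only [hu, mul_sub]
    rw [Finset.sum_sub_distrib, ← Finset.sum_mul, hwsum, one_mul, hZtilde]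
    simp
  have hud : ∀ j i, z j i - Zbar i = u j i + d i := by
    intro j i; simp only [hu, hd]; ring
  have hnpos : (0:ℝ) < n := Nat.cast_pos.2 hn
  -- mulVec of SGX, componentwise
  have hSGXmv : ∀ s : Fin (p+1) → ℝ, ∀ i,
      SGX.mulVec s i = (n:ℝ)⁻¹ * ∑ j, c j * X j i * (∑ k, X j k * s k) := by
    intro s i
    simp only [hSGX, Matrix.mulVec, dotProduct, Matrix.smul_apply, Matrix.sum_apply,
      Matrix.of_apply, smul_eq_mul, hG']
    simp only [Finset.mul_sum, Finset.sum_mul]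
    rw [Finset.sum_comm]
    exact Finset.sum_congr rfl fun j _ => Finset.sum_congr rfl fun k _ => by ring
  -- quadratic form of SGX
  have hquad : ∀ s : Fin (p+1) → ℝ,
      s ⬝ᵥ SGX.mulVec s = (n:ℝ)⁻¹ * ∑ j, c j * (∑ k, X j k * s k)^2 := by
    intro s
    simp only [dotProduct, hSGXmv, sq]
    simp only [Finset.mul_sum, Finset.sum_mul]
    rw [Finset.sum_comm]
    refine Finset.sum_congr rfl fun j _ => ?_
    rw [Finset.sum_comm]
    exact Finset.sum_congr rfl fun k _ => Finset.sum_congr rfl fun i _ => by ring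
  -- mulVec of Stilde, componentwise
  have hSmul : ∀ t : Fin p → ℝ, ∀ i,
      Stilde.mulVec t i = ∑ j, w j * u j i * (∑ k, u j k * t k) := by
    intro t i
    simp only [hStilde, Matrix.mulVec, dotProduct, Matrix.sum_apply, Matrix.smul_apply,
      Matrix.of_apply, smul_eq_mul, ← hu']
    simp only [Finset.mul_sum, Finset.sum_mul]
    rw [Finset.sum_comm]
    exact Finset.sum_congr rfl fun j _ => Finset.sum_congr rfl fun k _ => by ring
  have hquadS : ∀ t : Fin p → ℝ,
      t ⬝ᵥ Stilde.mulVec t = ∑ j, w j * (∑ k, u j k * t k)^2 := by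
    intro t
    simp only [dotProduct, hSmul, sq]
    simp only [Finset.mul_sum, Finset.sum_mul]
    rw [Finset.sum_comm]
    refine Finset.sum_congr rfl fun j _ => ?_
    rw [Finset.sum_comm]
    exact Finset.sum_congr rfl fun k _ => Finset.sum_congr rfl fun i _ => by ring
  have hSpos : Stilde.PosDef := by
    refine Matrix.PosDef.of_dotProduct_mulVec_pos ?_ ?_
    · show Stildeᴴ = Stilde
      ext i k
      simp only [Matrix.conjTranspose_apply, star_trivial, hStilde, Matrix.sum_apply,
        Matrix.smul_apply, Matrix.of_apply, smul_eq_mul]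
      exact Finset.sum_congr rfl fun j _ => by ring
    · intro t ht
      have hst : star t = t := by simp
      rw [hst, hquadS]
      set s : Fin (p+1) → ℝ := Fin.cons (-∑ i, d i * t i) t with hs
      have hsne : s ≠ 0 := by
        intro h
        apply ht
        ext i
        have := congrFun h i.succ
        simpa [hs] using this
      have hXsdot : ∀ j, ∑ k, X j k * s k = ∑ k, u j k * t k := by
        intro j
        rw [Fin.sum_univ_succ]
        simp only [hs, Fin.cons_zero, Fin.cons_succ, hX0, hXs]
        have : ∑ i, (z j i - Zbar i) * t i = ∑ i, (u j i * t i + d i * t i) := by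
          refine Finset.sum_congr rfl fun i _ => ?_
          rw [hud]; ring
        rw [this, Finset.sum_add_distrib]; ring
      have hq := hpos.dotProduct_mulVec_pos hsne
      rw [show star s = s by simp, hquad] at hq
      simp only [hXsdot] at hq
      have hq2 : 0 < ∑ j, c j * (∑ k, u j k * t k)^2 := by
        have := mul_pos hnpos hq
        rwa [← mul_assoc, mul_inv_cancel₀ hnpos.ne', one_mul] at this
      have hq3 : ∑ j, c j * (∑ k, u j k * t k)^2
          = C * ∑ j, w j * (∑ k, u j k * t k)^2 := by
        rw [Finset.mul_sum]
        refine Finset.sum_congr rfl fun j _ => ?_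
        rw [hcw j]; ring
      rw [hq3] at hq2
      nlinarith [hCpos]
  have hdet : IsUnit Stilde.det := hSpos.det_pos.ne'.isUnit
  -- the candidate solution
  set v : Fin p → ℝ := ∑ j, w j • fun i => (z j i - Ztilde i) * (y j - Ytilde) with hv
  have hv' : ∀ i, v i = ∑ j, w j * u j i * (y j - Ytilde) := by
    intro i
    simp only [hv, Finset.sum_apply, Pi.smul_apply, smul_eq_mul, ← hu]
    exact Finset.sum_congr rfl fun j _ => by ring
  set b : Fin p → ℝ := Stilde⁻¹.mulVec v with hb
  have hSb : Stilde.mulVec b = v := by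
    rw [hb, Matrix.mulVec_mulVec, Matrix.mul_nonsing_inv _ hdet, Matrix.one_mulVec]
  set β' : Fin (p+1) → ℝ := Fin.cons (Ytilde - ∑ i, d i * b i) b with hβ'
  set Q : Fin n → ℝ := fun j => ∑ k, u j k * b k with hQ
  have hip : ∀ j, ∑ k, X j k * β' k = Ytilde + Q j := by
    intro j
    rw [Fin.sum_univ_succ]
    simp only [hβ', Fin.cons_zero, Fin.cons_succ, hX0, hXs]
    have : ∑ i, (z j i - Zbar i) * b i = ∑ i, (u j i * b i + d i * b i) := by
      refine Finset.sum_congr rfl fun i _ => ?_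
      rw [hud]; ring
    rw [this, Finset.sum_add_distrib, hQ]; ring
  have hwQ : ∑ j, w j * Q j = 0 := by
    simp only [hQ, Finset.mul_sum]
    rw [Finset.sum_comm]
    have : ∀ k, ∑ j, w j * (u j k * b k) = (∑ j, w j * u j k) * b k := by
      intro k; rw [Finset.sum_mul]; exact Finset.sum_congr rfl fun j _ => by ring
    simp only [this, hu0, zero_mul, Finset.sum_const_zero]
  have hA : ∑ j, w j * (Ytilde + Q j - y j) = 0 := by
    have : ∀ j, w j * (Ytilde + Q j - y j)
        = w j * Ytilde + w j * Q j - w j * y j := fun j => by ring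
    simp only [this]
    rw [Finset.sum_sub_distrib, Finset.sum_add_distrib, ← Finset.sum_mul, hwsum, hwQ,
      ← hYtilde]
    ring
  have hB : ∀ i, ∑ j, w j * u j i * (Ytilde + Q j - y j) = 0 := by
    intro i
    have hexp : ∀ j, w j * u j i * (Ytilde + Q j - y j)
        = w j * u j i * Q j - w j * u j i * (y j - Ytilde) := fun j => by ring
    simp only [hexp]
    rw [Finset.sum_sub_distrib]
    have h1 : ∑ j, w j * u j i * Q j = v i := by
      have := hSmul b i
      rw [show Stilde.mulVec b i = v i from by rw [hSb]] at this
      rw [← this]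
    rw [h1, ← hv' i]
    ring
  have hmain : ∀ i, ∑ j, c j * X j i * (Ytilde + Q j - y j) = 0 := by
    intro i
    refine Fin.cases ?_ ?_ i
    · have : ∀ j, c j * X j 0 * (Ytilde + Q j - y j)
          = C * (w j * (Ytilde + Q j - y j)) := by
        intro j; rw [hX0, hcw j]; ring
      simp only [this]
      rw [← Finset.mul_sum, hA, mul_zero]
    · intro i
      have : ∀ j, c j * X j i.succ * (Ytilde + Q j - y j)
          = C * (w j * u j i * (Ytilde + Q j - y j))
            + (C * d i) * (w j * (Ytilde + Q j - y j)) := by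
        intro j; rw [hXs, hud, hcw j]; ring
      simp only [this]
      rw [Finset.sum_add_distrib, ← Finset.mul_sum, ← Finset.mul_sum, hA, hB, mul_zero,
        mul_zero, add_zero]
  have hsolve : SGX.mulVec β' = SGY := by
    funext i
    rw [hSGXmv]
    have hSGYi : SGY i = (n:ℝ)⁻¹ * ∑ j, y j * (c j * X j i) := by
      simp only [hSGY, Pi.smul_apply, Finset.sum_apply, smul_eq_mul, hG']
    rw [hSGYi]
    refine congrArg _ ?_
    rw [← sub_eq_zero, ← Finset.sum_sub_distrib]
    rw [← hmain i]
    refine Finset.sum_congr rfl fun j _ => ?_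
    rw [hip]; ring
  have hβeq : βhat = β' := by
    rw [hβhat, ← hsolve, Matrix.mulVec_mulVec,
      Matrix.nonsing_inv_mul _ hpos.det_pos.ne'.isUnit, Matrix.one_mulVec]
  refine ⟨hdet, ?_, ?_⟩
  · funext i
    rw [hβeq]
    simp only [hβ', Fin.cons_succ]
  · rw [hβeq]
    simp only [hβ', Fin.cons_zero, Fin.cons_succ]
    rfl
end

section
/- Let (X_j, Y_j), j ≥ 1, be i.i.d. pairs of real random variables with E|Y₁| < ∞, 0 < E|X₁| < ∞, and E[Y₁ | X₁] = β₁ X₁ almost surely for some β₁ ∈ ℝ. Then the estimator β̂₁ⁿ = (Σ_{j=1}ⁿ sign(X_j) Y_j) / (Σ_{j=1}ⁿ |X_j|) (defined arbitrarily on the event where the denominator vanishes) converges almost surely, and hence in probability, to β₁ as n → ∞. -/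
open MeasureTheory ProbabilityTheory Filter

lemma measurable_real_sign : Measurable Real.sign := by
  have h : Real.sign = fun r : ℝ => if r < 0 then (-1:ℝ) else if 0 < r then 1 else 0 := rfl
  rw [h]
  exact Measurable.ite (measurableSet_lt measurable_id measurable_const) measurable_const
    (Measurable.ite (measurableSet_lt measurable_const measurable_id) measurable_const
      measurable_const)

lemma abs_real_sign_le_one (x : ℝ) : |Real.sign x| ≤ 1 := by
  rcases lt_trichotomy x 0 with h | h | h
  · rw [Real.sign_of_neg h]; norm_num
  · rw [h, Real.sign_zero]; norm_num
  · rw [Real.sign_of_pos h]; norm_num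

lemma real_sign_mul_self (x : ℝ) : Real.sign x * x = |x| := by
  rcases lt_trichotomy x 0 with h | h | h
  · rw [Real.sign_of_neg h, abs_of_neg h]; ring
  · simp [h]
  · rw [Real.sign_of_pos h, abs_of_pos h]; ring

/-- For i.i.d. pairs `(X_j, Y_j)` with `E|Y₁| < ∞`,
`0 < E|X₁| < ∞` and `E[Y₁ | X₁] = β₁X₁` a.s., the estimator
`β̂₁ⁿ = (Σ sign(X_j)Y_j)/(Σ |X_j|)` converges almost surely, and hence in
probability, to `β₁`. -/
theorem statement8
    {Ω : Type*} [MeasurableSpace Ω] (μ : Measure Ω) [IsProbabilityMeasure μ]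
    (X Y : ℕ → Ω → ℝ)
    (hmeas : ∀ j, Measurable (fun ω => (X j ω, Y j ω)))
    -- i.i.d. pairs
    (hindep : iIndepFun (fun j ω => (X j ω, Y j ω)) μ)
    (hident : ∀ j, μ.map (fun ω => (X j ω, Y j ω)) = μ.map (fun ω => (X 0 ω, Y 0 ω)))
    (hYint : Integrable (Y 0) μ) (hXint : Integrable (X 0) μ)
    (hXpos : 0 < ∫ ω, |X 0 ω| ∂μ)
    (β1 : ℝ)
    (hA2 : μ[Y 0 | MeasurableSpace.comap (X 0) inferInstance]
        =ᵐ[μ] fun ω => β1 * X 0 ω)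
    (βhat : ℕ → Ω → ℝ)
    (hβhat : βhat = fun (n : ℕ) (ω : Ω) =>
      (∑ j ∈ Finset.range n, Real.sign (X j ω) * Y j ω) /
        ∑ j ∈ Finset.range n, |X j ω|) :
    (∀ᵐ ω ∂μ, Tendsto (fun n => βhat n ω) atTop (nhds β1)) ∧
      TendstoInMeasure μ (fun n ω => βhat n ω) atTop (fun _ => β1) := by
  -- measurability of components
  have hXm : ∀ j, Measurable (X j) := fun j => (hmeas j).fst
  have hYm : ∀ j, Measurable (Y j) := fun j => (hmeas j).snd
  -- the two sequences
  set Z : ℕ → Ω → ℝ := fun j ω => Real.sign (X j ω) * Y j ω with hZdef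
  set W : ℕ → Ω → ℝ := fun j ω => |X j ω| with hWdef
  set f : ℝ × ℝ → ℝ := fun p => Real.sign p.1 * p.2 with hfdef
  set g : ℝ × ℝ → ℝ := fun p => |p.1| with hgdef
  have hf : Measurable f := (measurable_real_sign.comp measurable_fst).mul measurable_snd
  have hg : Measurable g := measurable_fst.abs
  have hZm : ∀ j, Measurable (Z j) := fun j =>
    ((measurable_real_sign.comp (hXm j)).mul (hYm j))
  have hWm : ∀ j, Measurable (W j) := fun j => (hXm j).abs
  -- integrability
  have hZint : Integrable (Z 0) μ := by
    refine Integrable.mono hYint (hZm 0).aestronglyMeasurable ?_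
    refine Filter.Eventually.of_forall fun ω => ?_
    simp only [Real.norm_eq_abs, hZdef, abs_mul]
    calc |Real.sign (X 0 ω)| * |Y 0 ω| ≤ 1 * |Y 0 ω| :=
          mul_le_mul_of_nonneg_right (abs_real_sign_le_one _) (abs_nonneg _)
      _ = |Y 0 ω| := one_mul _
  have hWint : Integrable (W 0) μ := hXint.abs
  -- identical distributions
  have hZid : ∀ i, IdentDistrib (Z i) (Z 0) μ μ := fun i => by
    refine ⟨(hZm i).aemeasurable, (hZm 0).aemeasurable, ?_⟩
    have h1 : Z i = f ∘ (fun ω => (X i ω, Y i ω)) := rfl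
    have h2 : Z 0 = f ∘ (fun ω => (X 0 ω, Y 0 ω)) := rfl
    rw [h1, h2, ← Measure.map_map hf (hmeas i), ← Measure.map_map hf (hmeas 0), hident i]
  have hWid : ∀ i, IdentDistrib (W i) (W 0) μ μ := fun i => by
    refine ⟨(hWm i).aemeasurable, (hWm 0).aemeasurable, ?_⟩
    have h1 : W i = g ∘ (fun ω => (X i ω, Y i ω)) := rfl
    have h2 : W 0 = g ∘ (fun ω => (X 0 ω, Y 0 ω)) := rfl
    rw [h1, h2, ← Measure.map_map hg (hmeas i), ← Measure.map_map hg (hmeas 0), hident i]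
  -- pairwise independence
  have hZind : Pairwise (Function.onFun (IndepFun · · μ) Z) := fun i j hij =>
    (hindep.indepFun hij).comp hf hf
  have hWind : Pairwise (Function.onFun (IndepFun · · μ) W) := fun i j hij =>
    (hindep.indepFun hij).comp hg hg
  -- strong law for both
  have hZlaw := strong_law_ae (μ := μ) Z hZint hZind hZid
  have hWlaw := strong_law_ae (μ := μ) W hWint hWind hWid
  -- the key integral identity: E[Z 0] = β1 * E[|X 0|]
  set m : MeasurableSpace Ω := MeasurableSpace.comap (X 0) inferInstance with hmdef
  have hmle : m ≤ _ := (hXm 0).comap_le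
  have hsgn : StronglyMeasurable[m] (fun ω => Real.sign (X 0 ω)) := by
    have hX0m : Measurable[m] (X 0) := fun s hs => ⟨s, hs, rfl⟩
    exact (measurable_real_sign.comp hX0m).stronglyMeasurable
  have hcond : μ[Z 0 | m] =ᵐ[μ] (fun ω => Real.sign (X 0 ω)) * μ[Y 0 | m] := by
    have : Z 0 = (fun ω => Real.sign (X 0 ω)) * Y 0 := rfl
    rw [this]
    exact condExp_mul_of_stronglyMeasurable_left hsgn (this ▸ hZint) hYint
  have hEZ : μ[Z 0] = β1 * ∫ ω, |X 0 ω| ∂μ := by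
    have h1 : μ[Z 0] = ∫ ω, (μ[Z 0 | m]) ω ∂μ := (integral_condExp hmle).symm
    rw [h1]
    have h2 : (fun ω => Real.sign (X 0 ω)) * μ[Y 0 | m]
        =ᵐ[μ] fun ω => Real.sign (X 0 ω) * (β1 * X 0 ω) := by
      filter_upwards [hA2] with ω hω
      simp only [Pi.mul_apply, hω]
    have h3 : μ[Z 0 | m] =ᵐ[μ] fun ω => β1 * |X 0 ω| := by
      filter_upwards [hcond.trans h2] with ω hω
      rw [hω]
      rw [show Real.sign (X 0 ω) * (β1 * X 0 ω) = β1 * (Real.sign (X 0 ω) * X 0 ω) by ring,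
        real_sign_mul_self]
    rw [integral_congr_ae h3, integral_const_mul]
  -- a.e. convergence
  have hEWne : (∫ ω, |X 0 ω| ∂μ) ≠ 0 := ne_of_gt hXpos
  have hae : ∀ᵐ ω ∂μ, Tendsto (fun n => βhat n ω) atTop (nhds β1) := by
    filter_upwards [hZlaw, hWlaw] with ω hZω hWω
    have hdiv : Tendsto
        (fun n : ℕ => ((n:ℝ)⁻¹ • ∑ i ∈ Finset.range n, Z i ω) /
          ((n:ℝ)⁻¹ • ∑ i ∈ Finset.range n, W i ω)) atTop
        (nhds ((μ[Z 0]) / (μ[W 0]))) := by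
      refine hZω.div hWω ?_
      have : μ[W 0] = ∫ ω, |X 0 ω| ∂μ := rfl
      rw [this]; exact hEWne
    have heq : ∀ n : ℕ, βhat n ω = ((n:ℝ)⁻¹ • ∑ i ∈ Finset.range n, Z i ω) /
        ((n:ℝ)⁻¹ • ∑ i ∈ Finset.range n, W i ω) := by
      intro n
      rw [hβhat]
      rcases Nat.eq_zero_or_pos n with h | h
      · simp [h]
      · simp only [smul_eq_mul]
        rw [mul_div_mul_left _ _ (inv_ne_zero (Nat.cast_ne_zero.2 h.ne'))]
    have hlim : (μ[Z 0]) / (μ[W 0]) = β1 := by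
      have : μ[W 0] = ∫ ω, |X 0 ω| ∂μ := rfl
      rw [this, hEZ, mul_div_assoc, div_self hEWne, mul_one]
    rw [← hlim]
    exact hdiv.congr (fun n => (heq n).symm)
  refine ⟨hae, ?_⟩
  refine tendstoInMeasure_of_tendsto_ae (fun n => ?_) hae
  rw [hβhat]
  exact ((Finset.measurable_sum _ fun j _ => hZm j).div
    (Finset.measurable_sum _ fun j _ => hWm j)).aestronglyMeasurable
end

section
/- Let U be a real random variable whose law has density f with respect to Lebesgue measure and which satisfies P(U ≤ 0) = 1/2 (median zero). Then for every a ∈ ℝ the (always integrable) random variable |U − a| − |U| satisfies E[|U − a| − |U|] = 2 ∫_a^0 (s − a) f(s) ds, where ∫_a^0 = −∫_0^a when a > 0. In particular this expectation is nonnegative for every a. -/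
open MeasureTheory

/-- If the law of `U` has density `f` with respect to
Lebesgue measure and `P(U ≤ 0) = 1/2`, then for every `a ∈ ℝ` the (always
integrable) random variable `|U − a| − |U|` satisfies
`E[|U − a| − |U|] = 2 ∫_a^0 (s − a) f(s) ds`, and this expectation is
nonnegative. -/
theorem statement13
    {Ω : Type*} [MeasurableSpace Ω] (μ : Measure Ω) [IsProbabilityMeasure μ]
    (U : Ω → ℝ) (hUmeas : Measurable U)
    (f : ℝ → ℝ) (hfmeas : Measurable f) (hf0 : ∀ s, 0 ≤ f s)
    (hdens : μ.map U = MeasureTheory.volume.withDensity fun s => ENNReal.ofReal (f s))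
    (hmed : μ {ω | U ω ≤ 0} = 1 / 2) :
    ∀ a : ℝ,
      Integrable (fun ω => |U ω - a| - |U ω|) μ ∧
      (∫ ω, (|U ω - a| - |U ω|) ∂μ) = 2 * ∫ s in a..(0 : ℝ), (s - a) * f s ∧
      0 ≤ ∫ ω, (|U ω - a| - |U ω|) ∂μ := by
  -- total mass
  have htot : ∫⁻ s, ENNReal.ofReal (f s) = 1 := by
    have h : μ.map U Set.univ = 1 := by
      rw [Measure.map_apply hUmeas MeasurableSet.univ]; simp
    rwa [hdens, withDensity_apply _ MeasurableSet.univ, Measure.restrict_univ] at h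
  have hhalf : ∫⁻ s in Set.Iic (0:ℝ), ENNReal.ofReal (f s) = 1/2 := by
    have h : μ.map U (Set.Iic 0) = 1/2 := by
      rw [Measure.map_apply hUmeas measurableSet_Iic]; exact hmed
    rwa [hdens, withDensity_apply _ measurableSet_Iic] at h
  have hfint : Integrable f := by
    have h := integrable_toReal_of_lintegral_ne_top
      (hfmeas.ennreal_ofReal).aemeasurable (by rw [htot]; exact ENNReal.one_ne_top)
    have heq : (fun x => (ENNReal.ofReal (f x)).toReal) = f :=
      funext fun x => ENNReal.toReal_ofReal (hf0 x)
    rwa [heq] at h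
  have hI1 : ∫ s, f s = 1 := by
    rw [integral_eq_lintegral_of_nonneg_ae (Filter.Eventually.of_forall hf0)
      hfmeas.aestronglyMeasurable, htot]; simp
  have hIhalf : ∫ s in Set.Iic (0:ℝ), f s = 1/2 := by
    rw [integral_eq_lintegral_of_nonneg_ae (Filter.Eventually.of_forall hf0)
      hfmeas.aestronglyMeasurable, hhalf]
    simp [ENNReal.toReal_div]
  intro a
  have hmeasφ : Measurable fun s : ℝ => |s - a| - |s| :=
    (measurable_id.sub_const a).abs.sub measurable_id.abs
  have hint : Integrable (fun ω => |U ω - a| - |U ω|) μ := by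
    refine Integrable.mono' (integrable_const |a|)
      ((hmeasφ.comp hUmeas).aestronglyMeasurable) ?_
    filter_upwards with ω
    rw [Real.norm_eq_abs]
    refine le_trans (abs_abs_sub_abs_le_abs_sub _ _) ?_
    rw [sub_sub_cancel_left, abs_neg]
  -- transfer to ℝ
  have hmain : (∫ ω, (|U ω - a| - |U ω|) ∂μ) = ∫ s, f s * (|s - a| - |s|) := by
    have hM := integral_map (μ := μ) (φ := U) hUmeas.aemeasurable
      (f := fun s : ℝ => |s - a| - |s|) hmeasφ.aestronglyMeasurable
    rw [← hM, hdens]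
    rw [show (fun s : ℝ => ENNReal.ofReal (f s))
        = (fun s => ((Real.toNNReal (f s) : NNReal) : ENNReal)) from rfl]
    rw [integral_withDensity_eq_integral_smul hfmeas.real_toNNReal]
    congr 1; funext s
    rw [NNReal.smul_def, smul_eq_mul, Real.coe_toNNReal _ (hf0 s)]
  -- pointwise identity
  have hpt : ∀ s : ℝ, f s * (|s - a| - |s|) =
      (Set.Iic (0:ℝ)).indicator (fun s => 2*a*f s) s - a * f s
        + (Set.uIoc (0:ℝ) a).indicator (fun s => 2 * (|s - a| * f s)) s := by
    intro s
    rcases le_or_gt s 0 with hs | hs <;> rcases le_or_gt s a with hsa | hsa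
    · -- s ≤ 0, s ≤ a
      rw [Set.indicator_of_mem (Set.mem_Iic.mpr hs),
        Set.indicator_of_notMem (by rw [Set.mem_uIoc]; push_neg; constructor <;> intro h <;> linarith),
        abs_of_nonpos (by linarith), abs_of_nonpos hs]
      ring
    · -- s ≤ 0, a < s : so a < s ≤ 0, in uIoc
      rw [Set.indicator_of_mem (Set.mem_Iic.mpr hs),
        Set.indicator_of_mem (Set.mem_uIoc.mpr (Or.inr ⟨hsa, hs⟩)),
        abs_of_nonneg (by linarith), abs_of_nonpos hs]
      ring
    · -- 0 < s, s ≤ a : in uIoc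
      rw [Set.indicator_of_notMem (by simpa using hs),
        Set.indicator_of_mem (Set.mem_uIoc.mpr (Or.inl ⟨hs, hsa⟩)),
        abs_of_nonpos (by linarith), abs_of_pos hs]
      ring
    · -- 0 < s, a < s
      rw [Set.indicator_of_notMem (by simpa using hs),
        Set.indicator_of_notMem (by rw [Set.mem_uIoc]; push_neg; constructor <;> intro h <;> linarith),
        abs_of_nonneg (by linarith), abs_of_pos hs]
      ring
  have hind1 : Integrable (fun s => (Set.Iic (0:ℝ)).indicator (fun s => 2*a*f s) s) :=
    (hfint.const_mul (2*a)).indicator measurableSet_Iic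
  have hind2 : Integrable (fun s => a * f s) := hfint.const_mul a
  have hind3 : Integrable (fun s => (Set.uIoc (0:ℝ) a).indicator (fun s => 2 * (|s - a| * f s)) s) := by
    rw [integrable_indicator_iff measurableSet_uIoc]
    apply Integrable.const_mul
    refine Integrable.bdd_mul (c := |a|) hfint.integrableOn
      ((measurable_id.sub_const a).abs.aestronglyMeasurable) ?_
    filter_upwards [ae_restrict_mem measurableSet_uIoc] with s hs
    rw [Real.norm_eq_abs, abs_abs]
    rcases Set.mem_uIoc.mp hs with ⟨h1, h2⟩ | ⟨h1, h2⟩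
    · rw [abs_of_nonpos (by linarith), abs_of_pos (lt_of_lt_of_le h1 h2)]; linarith
    · rw [abs_of_nonneg (by linarith), abs_of_neg (lt_of_lt_of_le h1 h2)]; linarith
  have hsplit : ∫ s, f s * (|s - a| - |s|) =
      2 * ∫ s in Set.uIoc (0:ℝ) a, |s - a| * f s := by
    calc ∫ s, f s * (|s - a| - |s|)
        = ∫ s, ((Set.Iic (0:ℝ)).indicator (fun s => 2*a*f s) s - a * f s
            + (Set.uIoc (0:ℝ) a).indicator (fun s => 2 * (|s - a| * f s)) s) := by
          exact integral_congr_ae (Filter.Eventually.of_forall hpt)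
      _ = (∫ s, (Set.Iic (0:ℝ)).indicator (fun s => 2*a*f s) s) - (∫ s, a * f s)
            + ∫ s, (Set.uIoc (0:ℝ) a).indicator (fun s => 2 * (|s - a| * f s)) s := by
          have hind12 : Integrable (fun s => (Set.Iic (0:ℝ)).indicator (fun s => 2*a*f s) s
              - a * f s) := hind1.sub hind2
          rw [integral_add hind12 hind3, integral_sub hind1 hind2]
      _ = 2 * ∫ s in Set.uIoc (0:ℝ) a, |s - a| * f s := by
          rw [integral_indicator measurableSet_Iic, integral_indicator measurableSet_uIoc,
            integral_const_mul, integral_const_mul, integral_const_mul, hI1, hIhalf]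
          ring
  have hJnn : 0 ≤ ∫ s in Set.uIoc (0:ℝ) a, |s - a| * f s :=
    setIntegral_nonneg measurableSet_uIoc fun s _ => mul_nonneg (abs_nonneg _) (hf0 s)
  have hJ : (2:ℝ) * ∫ s in Set.uIoc (0:ℝ) a, |s - a| * f s
      = 2 * ∫ s in a..(0:ℝ), (s - a) * f s := by
    rcases le_or_gt a 0 with ha | ha
    · rw [Set.uIoc_of_ge ha, intervalIntegral.integral_of_le ha]
      congr 1
      refine setIntegral_congr_fun measurableSet_Ioc fun s hs => ?_
      rw [abs_of_nonneg (by linarith [hs.1])]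
    · rw [Set.uIoc_of_le ha.le, intervalIntegral.integral_of_ge ha.le, ← integral_neg]
      congr 1
      refine setIntegral_congr_fun measurableSet_Ioc fun s hs => ?_
      rw [abs_of_nonpos (by linarith [hs.2])]; ring
  refine ⟨hint, ?_, ?_⟩
  · rw [hmain, hsplit, hJ]
  · rw [hmain, hsplit]; positivity
end
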